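/- Let p be a prime, s a positive integer, q = p^s, R = Z_q[u]/(u^2), and n a positive integer. Let g ∈ R[X] be monic with g dividing X^n − 1 in R[X], and let C be the ideal of R[X]/(X^n − 1) generated by the image of g. Then the images of g, X·g, …, X^{n−deg g−1}·g form a basis of C as an R-module (in particular C is free of rank n − deg g), and the cardinality of C is q^{2(n − deg g)}. -/

import Mathlib

open Polynomial

private lemma free_cyclic_code_aux {R : Type*} [CommRing R] [Nontrivial R] {n : ℕ}
    (hn : 0 < n) {g h : R[X]} (hg : g.Monic)
    (hfh : (X ^ n - 1 : R[X]) = g * h)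
    (C : Ideal (AdjoinRoot (X ^ n - 1 : R[X])))
    (hC : C = Ideal.span {AdjoinRoot.mk (X ^ n - 1 : R[X]) g}) :
    ∃ e : (Fin h.natDegree → R) ≃ₗ[R] Submodule.restrictScalars R C,
      ∀ i : Fin h.natDegree,
        ((e (Pi.single i 1) : Submodule.restrictScalars R C) :
            AdjoinRoot (X ^ n - 1 : R[X])) =
          AdjoinRoot.mk (X ^ n - 1 : R[X]) (X ^ (i : ℕ) * g) := by
  classical
  have hf : (X ^ n - 1 : R[X]).Monic := by
    have := monic_X_pow_sub_C (1 : R) hn.ne'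
    simpa using this
  have hh : h.Monic := hg.of_mul_monic_left (hfh ▸ hf)
  set m := h.natDegree with hmdef
  have hhdeg : h.degree = (m : WithBot ℕ) := Polynomial.degree_eq_natDegree hh.ne_zero
  set v : Fin m → AdjoinRoot (X ^ n - 1 : R[X]) :=
    fun i => AdjoinRoot.mk _ (X ^ (i : ℕ) * g) with hvdef
  have hv : ∀ i, v i ∈ C := by
    intro i
    rw [hC]
    exact Ideal.mem_span_singleton.mpr
      ⟨AdjoinRoot.mk _ (X ^ (i : ℕ)), by rw [← map_mul, mul_comm]⟩
  set v' : Fin m → (Submodule.restrictScalars R C) := fun i => ⟨v i, hv i⟩ with hv'def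
  set φ : (Fin m → R) →ₗ[R] (Submodule.restrictScalars R C) :=
    Fintype.linearCombination R v' with hφdef
  have key : ∀ c : Fin m → R,
      ((φ c : Submodule.restrictScalars R C) : AdjoinRoot (X ^ n - 1 : R[X])) =
        AdjoinRoot.mk _ ((∑ i : Fin m, Polynomial.C (c i) * X ^ (i : ℕ)) * g) := by
    intro c
    rw [hφdef, Fintype.linearCombination_apply]
    push_cast
    rw [Finset.sum_mul, map_sum]
    refine Finset.sum_congr rfl fun i _ => ?_
    show c i • v i = _
    simp only [hvdef]
    rw [AdjoinRoot.smul_mk, Polynomial.smul_eq_C_mul, ← mul_assoc]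
  have hinj : Function.Injective φ := by
    rw [injective_iff_map_eq_zero]
    intro c hc
    set r : R[X] := ∑ i : Fin m, Polynomial.C (c i) * X ^ (i : ℕ) with hrdef
    have h0 : AdjoinRoot.mk (X ^ n - 1 : R[X]) (r * g) = 0 := by
      rw [← key c, hc]; rfl
    obtain ⟨t, ht⟩ := AdjoinRoot.mk_eq_zero.mp h0
    have hr0 : r = 0 := by
      have hrh : r = h * t := by
        have : g * r = g * (h * t) := by
          rw [mul_comm g r, ht, hfh]; ring
        exact hg.isRegular.left this
      by_cases ht0 : t = 0
      · rw [hrh, ht0, mul_zero]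
      · exfalso
        have hdm : r.degree = t.degree + h.degree := by
          rw [hrh, hh.degree_mul_comm, hh.degree_mul]
        have h2 : r.degree < (m : WithBot ℕ) := by
          refine lt_of_le_of_lt (Polynomial.degree_sum_le _ _) ?_
          rw [Finset.sup_lt_iff (by exact_mod_cast WithBot.bot_lt_coe m)]
          intro i _
          refine lt_of_le_of_lt (Polynomial.degree_C_mul_X_pow_le _ _) ?_
          exact_mod_cast i.2
        have h1 : (m : WithBot ℕ) ≤ r.degree := by
          rw [hdm, hhdeg]
          calc (m : WithBot ℕ) = 0 + (m : WithBot ℕ) := by rw [zero_add]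
            _ ≤ t.degree + (m : WithBot ℕ) :=
              add_le_add_left (Polynomial.zero_le_degree_iff.mpr ht0) _
        exact absurd (lt_of_le_of_lt h1 h2) (lt_irrefl _)
    funext j
    have hco := congrArg (fun q : R[X] => q.coeff (j : ℕ)) hr0
    simp only [hrdef, Polynomial.finset_sum_coeff, Polynomial.coeff_C_mul,
      Polynomial.coeff_X_pow, Polynomial.coeff_zero, mul_ite, mul_one, mul_zero] at hco
    rw [Finset.sum_eq_single j (fun i _ hij => if_neg
        (fun hji => hij (Fin.ext hji.symm))) (by simp)] at hco
    simpa using hco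
  have hsurj : Function.Surjective φ := by
    intro y
    have hy : (y : AdjoinRoot (X ^ n - 1 : R[X])) ∈
        Ideal.span {AdjoinRoot.mk (X ^ n - 1 : R[X]) g} := by
      rw [← hC]; exact y.2
    obtain ⟨z, hz⟩ := Ideal.mem_span_singleton'.mp hy
    obtain ⟨a, rfl⟩ := AdjoinRoot.mk_surjective z
    set r : R[X] := a %ₘ h with hrdef
    refine ⟨fun i => r.coeff (i : ℕ), ?_⟩
    apply Subtype.ext
    rw [key]
    have hsum : (∑ i : Fin m, Polynomial.C (r.coeff (i : ℕ)) * X ^ (i : ℕ)) = r := by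
      by_cases hr0 : r = 0
      · simp [hr0]
      · have hdlt : r.degree < h.degree := Polynomial.degree_modByMonic_lt a hh
        rw [hhdeg] at hdlt
        have hnlt : r.natDegree < m :=
          (Polynomial.natDegree_lt_iff_degree_lt hr0).mpr hdlt
        rw [Fin.sum_univ_eq_sum_range (fun i => Polynomial.C (r.coeff i) * X ^ i) m]
        simp_rw [Polynomial.C_mul_X_pow_eq_monomial]
        exact (Polynomial.as_sum_range' r m hnlt).symm
    rw [hsum]
    have hra : (X ^ n - 1 : R[X]) ∣ r * g - a * g := by
      have hmd : r + h * (a /ₘ h) = a := Polynomial.modByMonic_add_div a h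
      refine ⟨-(a /ₘ h), ?_⟩
      rw [hfh]
      have hdiff : r - a = -(h * (a /ₘ h)) := by linear_combination hmd
      calc r * g - a * g = (r - a) * g := by ring
        _ = -(h * (a /ₘ h)) * g := by rw [hdiff]
        _ = g * h * -(a /ₘ h) := by ring
    have hmk : AdjoinRoot.mk (X ^ n - 1 : R[X]) (r * g) =
        AdjoinRoot.mk (X ^ n - 1 : R[X]) (a * g) := by
      rw [AdjoinRoot.mk_eq_mk]; exact hra
    rw [hmk, map_mul, hz]
  refine ⟨LinearEquiv.ofBijective φ ⟨hinj, hsurj⟩, fun i => ?_⟩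
  have h3 : (LinearEquiv.ofBijective φ ⟨hinj, hsurj⟩) (Pi.single i 1) =
      φ (Pi.single i 1) := rfl
  rw [h3, key]
  congr 1
  simp [Pi.single_apply, apply_ite Polynomial.C]

set_option maxHeartbeats 1000000 in
/-- If `g` is monic and divides `X^n − 1` over `R = Z_q[u]/(u^2)`, then the images
of `g, Xg, …, X^{n−deg g−1}g` form an `R`-basis of the cyclic code `C = (g)`, and
`|C| = q^{2(n − deg g)}`. -/
theorem free_cyclic_code_basis (p s n : ℕ) [Fact p.Prime] (hs : 0 < s) (hn : 0 < n)
    (g : Polynomial (DualNumber (ZMod (p ^ s)))) (hg : g.Monic)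
    (hdvd : g ∣ (X ^ n - 1 : Polynomial (DualNumber (ZMod (p ^ s)))))
    (C : Ideal (AdjoinRoot (X ^ n - 1 : Polynomial (DualNumber (ZMod (p ^ s))))))
    (hC : C = Ideal.span
      {AdjoinRoot.mk (X ^ n - 1 : Polynomial (DualNumber (ZMod (p ^ s)))) g}) :
    (∃ B : Module.Basis (Fin (n - g.natDegree)) (DualNumber (ZMod (p ^ s)))
        (Submodule.restrictScalars (DualNumber (ZMod (p ^ s))) C),
      ∀ i : Fin (n - g.natDegree),
        (B i : AdjoinRoot (X ^ n - 1 : Polynomial (DualNumber (ZMod (p ^ s))))) =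
          AdjoinRoot.mk (X ^ n - 1 : Polynomial (DualNumber (ZMod (p ^ s))))
            (X ^ (i : ℕ) * g)) ∧
    Nat.card C = (p ^ s) ^ (2 * (n - g.natDegree)) := by
  classical
  haveI : Fact (1 < p ^ s) :=
    ⟨Nat.one_lt_pow hs.ne' (Fact.out : p.Prime).one_lt⟩
  obtain ⟨h, hfh⟩ := hdvd
  obtain ⟨e, he⟩ := free_cyclic_code_aux hn hg hfh C hC
  have hf : (X ^ n - 1 : Polynomial (DualNumber (ZMod (p ^ s)))).Monic := by
    have := monic_X_pow_sub_C (1 : DualNumber (ZMod (p ^ s))) hn.ne'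
    simpa using this
  have hh : h.Monic := hg.of_mul_monic_left (hfh ▸ hf)
  have hfn : (X ^ n - 1 : Polynomial (DualNumber (ZMod (p ^ s)))).natDegree = n := by
    have h1 : (X ^ n - 1 : Polynomial (DualNumber (ZMod (p ^ s)))) =
        X ^ n - Polynomial.C 1 := by simp
    rw [h1, natDegree_X_pow_sub_C]
  have hdeg : g.natDegree + h.natDegree = n := by
    rw [← hfn, hfh, hg.natDegree_mul hh]
  have hmn : n - g.natDegree = h.natDegree := by omega
  rw [hmn]
  constructor
  · refine ⟨Module.Basis.ofEquivFun e.symm, fun i => ?_⟩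
    rw [Module.Basis.coe_ofEquivFun]
    simpa using he i
  · have e1 : Nat.card C = Nat.card (Fin h.natDegree → DualNumber (ZMod (p ^ s))) :=
      Nat.card_congr (e.toEquiv.symm)
    rw [e1, Nat.card_pi, Finset.prod_const, Finset.card_univ, Fintype.card_fin]
    have hcardR : Nat.card (DualNumber (ZMod (p ^ s))) = (p ^ s) ^ 2 := by
      have h2 : Nat.card (DualNumber (ZMod (p ^ s))) =
          Nat.card (ZMod (p ^ s) × ZMod (p ^ s)) := rfl
      rw [h2, Nat.card_prod, Nat.card_zmod, sq]
    rw [hcardR, ← pow_mul]
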